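/- Let H1, H2, H3, H4 be subgroups of a finite group G with H1 ∩ H2 = 1 (trivial). Then the Ingleton inequality holds for (H1, H2, H3, H4). -/

import Mathlib

lemma aux_card_mul_le {G : Type*} [Group G] [Finite G] (A B K : Subgroup G)
    (hA : A ≤ K) (hB : B ≤ K) :
    Nat.card A * Nat.card B ≤ Nat.card K * Nat.card (A ⊓ B : Subgroup G) := by
  classical
  set H : Subgroup A := (A ⊓ B).subgroupOf A with hH
  have hcardA : Nat.card A = Nat.card (A ⧸ H) * Nat.card H :=
    Subgroup.card_eq_card_quotient_mul_card_subgroup H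
  have hcardH : Nat.card H = Nat.card (A ⊓ B : Subgroup G) :=
    Nat.card_congr (Subgroup.subgroupOfEquivOfLe inf_le_left).toEquiv
  -- injection (A ⧸ H) × B → K
  have hinj : ∃ f : (A ⧸ H) × B → K, Function.Injective f := by
    refine ⟨fun p => ⟨((Quotient.out p.1 : A) : G) * p.2, K.mul_mem (hA (Quotient.out p.1 : A).2) (hB p.2.2)⟩, ?_⟩
    rintro ⟨q, b⟩ ⟨q', b'⟩ hpq
    simp only [Subtype.mk.injEq] at hpq
    have hmem : (((Quotient.out q' : A) : A)⁻¹ * (Quotient.out q : A) : A) ∈ H := by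
      have h1 : (((Quotient.out q' : A) : G))⁻¹ * ((Quotient.out q : A) : G) = (b' : G) * (b : G)⁻¹ := by
        rw [inv_mul_eq_iff_eq_mul, ← mul_assoc, ← hpq, mul_inv_cancel_right]
      refine Subgroup.mem_subgroupOf.2 ?_
      refine Subgroup.mem_inf.2 ⟨?_, ?_⟩
      · exact Subgroup.mul_mem _ (Subgroup.inv_mem _ (Quotient.out q' : A).2) (Quotient.out q : A).2
      · rw [Subgroup.coe_mul, Subgroup.coe_inv, h1]
        exact B.mul_mem b'.2 (B.inv_mem b.2)
    have hq : q = q' := by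
      rw [← QuotientGroup.out_eq' q, ← QuotientGroup.out_eq' q']
      exact (QuotientGroup.eq.2 hmem).symm
    subst hq
    have hb : (b : G) = b' := by
      have := hpq
      exact mul_left_cancel this
    exact Prod.ext rfl (Subtype.ext hb)
  obtain ⟨f, hf⟩ := hinj
  have hle : Nat.card ((A ⧸ H) × B) ≤ Nat.card K := Nat.card_le_card_of_injective f hf
  rw [Nat.card_prod] at hle
  calc Nat.card A * Nat.card B
      = (Nat.card (A ⧸ H) * Nat.card B) * Nat.card (A ⊓ B : Subgroup G) := by
        rw [hcardA, hcardH]; ring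
    _ ≤ Nat.card K * Nat.card (A ⊓ B : Subgroup G) := Nat.mul_le_mul_right _ hle

theorem stmt8 {G : Type*} [Group G] [Finite G] (H1 H2 H3 H4 : Subgroup G)
    (h : H1 ⊓ H2 = ⊥) :
    Nat.card (H1 : Subgroup G) * Nat.card (H2 : Subgroup G) * Nat.card (H3 ⊓ H4 : Subgroup G) * Nat.card (H1 ⊓ H2 ⊓ H3 : Subgroup G) * Nat.card (H1 ⊓ H2 ⊓ H4 : Subgroup G) ≥ Nat.card (H1 ⊓ H2 : Subgroup G) * Nat.card (H1 ⊓ H3 : Subgroup G) * Nat.card (H1 ⊓ H4 : Subgroup G) * Nat.card (H2 ⊓ H3 : Subgroup G) * Nat.card (H2 ⊓ H4 : Subgroup G) := by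
  have hbot : Nat.card (⊥ : Subgroup G) = 1 := Subgroup.card_bot
  have e1 : (H1 ⊓ H2 ⊓ H3 : Subgroup G) = ⊥ := by rw [h]; simp
  have e2 : (H1 ⊓ H2 ⊓ H4 : Subgroup G) = ⊥ := by rw [h]; simp
  rw [e1, e2, h, hbot]
  simp only [mul_one, one_mul]
  have k1 : Nat.card (H1 ⊓ H3 : Subgroup G) * Nat.card (H1 ⊓ H4 : Subgroup G) ≤
      Nat.card H1 * Nat.card (H1 ⊓ (H3 ⊓ H4) : Subgroup G) := by
    have := aux_card_mul_le (H1 ⊓ H3) (H1 ⊓ H4) H1 inf_le_left inf_le_left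
    rwa [show (H1 ⊓ H3) ⊓ (H1 ⊓ H4) = H1 ⊓ (H3 ⊓ H4) from (inf_inf_distrib_left H1 H3 H4).symm] at this
  have k2 : Nat.card (H2 ⊓ H3 : Subgroup G) * Nat.card (H2 ⊓ H4 : Subgroup G) ≤
      Nat.card H2 * Nat.card (H2 ⊓ (H3 ⊓ H4) : Subgroup G) := by
    have := aux_card_mul_le (H2 ⊓ H3) (H2 ⊓ H4) H2 inf_le_left inf_le_left
    rwa [show (H2 ⊓ H3) ⊓ (H2 ⊓ H4) = H2 ⊓ (H3 ⊓ H4) from (inf_inf_distrib_left H2 H3 H4).symm] at this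
  have k3 : Nat.card (H1 ⊓ (H3 ⊓ H4) : Subgroup G) * Nat.card (H2 ⊓ (H3 ⊓ H4) : Subgroup G) ≤
      Nat.card (H3 ⊓ H4 : Subgroup G) := by
    have := aux_card_mul_le (H1 ⊓ (H3 ⊓ H4)) (H2 ⊓ (H3 ⊓ H4)) (H3 ⊓ H4) inf_le_right inf_le_right
    have einf : (H1 ⊓ (H3 ⊓ H4)) ⊓ (H2 ⊓ (H3 ⊓ H4)) = (⊥ : Subgroup G) := by
      rw [inf_inf_inf_comm, h]; simp
    rwa [einf, hbot, mul_one] at this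
  calc Nat.card (H1 ⊓ H3 : Subgroup G) * Nat.card (H1 ⊓ H4 : Subgroup G) *
        Nat.card (H2 ⊓ H3 : Subgroup G) * Nat.card (H2 ⊓ H4 : Subgroup G)
      ≤ (Nat.card H1 * Nat.card (H1 ⊓ (H3 ⊓ H4) : Subgroup G)) *
        (Nat.card H2 * Nat.card (H2 ⊓ (H3 ⊓ H4) : Subgroup G)) := by
        rw [mul_assoc]
        exact Nat.mul_le_mul k1 k2
    _ ≤ Nat.card H1 * Nat.card H2 * Nat.card (H3 ⊓ H4 : Subgroup G) := by
        calc Nat.card H1 * Nat.card (H1 ⊓ (H3 ⊓ H4) : Subgroup G) *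
              (Nat.card H2 * Nat.card (H2 ⊓ (H3 ⊓ H4) : Subgroup G))
            = Nat.card H1 * Nat.card H2 *
              (Nat.card (H1 ⊓ (H3 ⊓ H4) : Subgroup G) * Nat.card (H2 ⊓ (H3 ⊓ H4) : Subgroup G)) := by ring
          _ ≤ Nat.card H1 * Nat.card H2 * Nat.card (H3 ⊓ H4 : Subgroup G) :=
              Nat.mul_le_mul_left _ k3
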